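/- For every integer n ≥ 2 and every real (or indeterminate) μ, the determinant of the n×n matrix with (i,j) entry c_{i,j} = 1 + (−1)^{i+j} − δ_{i,j}·2μ/(2i+1) (for 1 ≤ i,j ≤ n) equals ((−1)^n / (3/2)_n) · μ^{n−2} · (μ − 2⌊n/2⌋² − 3⌊n/2⌋) · (μ − 2⌈n/2⌉² − ⌈n/2⌉); equivalently it equals ((−1)^n/(3/2)_n)·μ^{n−2}·(μ − (n²+3n)/2)·(μ − (n²+n)/2) if n is even, and ((−1)^n/(3/2)_n)·μ^{n−2}·(μ − (n²+3n+2)/2)·(μ − (n²+n−2)/2) if n is odd. -/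

import Mathlib

open Matrix Finset

private lemma det_rankone_aux (m : ℕ) (hm : 1 ≤ m) (u : Fin m → ℝ) (c : ℝ) :
    Matrix.det (Matrix.of fun i j : Fin m => u j - if i = j then c else 0)
      = (-1) ^ m * c ^ (m - 1) * (c - ∑ j, u j) := by
  rcases eq_or_ne c 0 with rfl | hc
  · rcases eq_or_lt_of_le hm with h1 | h2
    · obtain rfl : m = 1 := h1.symm
      simp [Matrix.det_fin_one]
    · have h0 : (⟨0, by omega⟩ : Fin m) ≠ ⟨1, by omega⟩ := by simp [Fin.ext_iff]
      rw [← Matrix.det_transpose]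
      rw [Matrix.det_zero_of_column_eq h0 (fun k => by
        simp [Matrix.transpose_apply, Fin.ext_iff])]
      have : m - 1 ≠ 0 := by omega
      simp [this]
  · have key : (Matrix.of fun i j : Fin m => u j - if i = j then c else 0)
        = (-c) • (1 + Matrix.replicateCol (Fin 1) (fun _ => (1:ℝ)) *
            Matrix.replicateRow (Fin 1) (fun j => -(u j)/c)) := by
      ext i j
      by_cases h : i = j
      · subst h
        simp [Matrix.mul_apply, Matrix.one_apply, Matrix.replicateCol, Matrix.replicateRow]
        field_simp
        ring
      · simp [Matrix.mul_apply, Matrix.one_apply, h, Matrix.replicateCol, Matrix.replicateRow]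
        field_simp
    rw [key, Matrix.det_smul]; erw [Matrix.det_one_add_replicateCol_mul_replicateRow]
    simp [dotProduct, Fintype.card_fin]
    have hcm : (c ^ m : ℝ) = c * c ^ (m - 1) := by
      rw [← pow_succ']
      congr 1
      omega
    rw [neg_pow, hcm]
    have hs : ∑ x : Fin m, -u x / c = -(∑ x : Fin m, u x)/c := by
      rw [← Finset.sum_div, ← Finset.sum_neg_distrib]
    rw [hs]
    field_simp
    ring

private lemma interleave_prod_aux (f : ℕ → ℝ) : ∀ n : ℕ,
    (∏ k ∈ range ((n+1)/2), f (2*k)) * (∏ k ∈ range (n/2), f (2*k+1))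
      = ∏ i ∈ range n, f i := by
  intro n
  induction n with
  | zero => simp
  | succ n ih =>
    rcases Nat.even_or_odd n with ⟨t, ht⟩ | ⟨t, ht⟩
    · subst ht
      have h1 : (t + t + 1 + 1)/2 = (t + t + 1)/2 + 1 := by omega
      have h2 : (t + t + 1)/2 = t := by omega
      have h3 : (t + t)/2 = t := by omega
      rw [h1, h2, prod_range_succ, prod_range_succ, ← ih, h2, h3,
        show 2*t = t + t by ring]
      ring
    · subst ht
      have h1 : (2*t + 1 + 1 + 1)/2 = (2*t + 1 + 1)/2 := by omega
      have h2 : (2*t + 1 + 1)/2 = t + 1 := by omega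
      have h3 : (2*t+1)/2 = t := by omega
      rw [h1, h2, prod_range_succ, prod_range_succ, prod_range_succ, ← ih, h2, h3,
        prod_range_succ]
      ring

private lemma sum_4k3_aux (p : ℕ) :
    ∑ k ∈ range p, (2*(4*(k:ℝ)+3)) = 4*(p:ℝ)^2 + 2*p := by
  induction p with
  | zero => simp
  | succ p ih => rw [sum_range_succ, ih]; push_cast; ring

private lemma sum_4k5_aux (p : ℕ) :
    ∑ k ∈ range p, (2*(4*(k:ℝ)+5)) = 4*(p:ℝ)^2 + 6*p := by
  induction p with
  | zero => simp
  | succ p ih => rw [sum_range_succ, ih]; push_cast; ring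

private lemma poch_prod_aux (n : ℕ) :
    (ascPochhammer ℝ n).eval (3/2 : ℝ) = ∏ i ∈ range n, ((3:ℝ)/2 + i) := by
  induction n with
  | zero => simp
  | succ n ih => rw [ascPochhammer_succ_eval, ih, prod_range_succ]

private lemma poch_pos_aux (n : ℕ) : 0 < (ascPochhammer ℝ n).eval (3/2 : ℝ) := by
  rw [poch_prod_aux]
  exact Finset.prod_pos (fun i _ => by positivity)

private def parityEquivAux (n : ℕ) : Fin ((n+1)/2) ⊕ Fin (n/2) ≃ Fin n where
  toFun := Sum.elim (fun k => ⟨2*k, by have := k.isLt; omega⟩)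
    (fun k => ⟨2*k+1, by have := k.isLt; omega⟩)
  invFun i := if h : (i : ℕ) % 2 = 0 then Sum.inl ⟨(i:ℕ)/2, by have := i.isLt; omega⟩
    else Sum.inr ⟨(i:ℕ)/2, by have := i.isLt; omega⟩
  left_inv x := by
    rcases x with k | k
    · show (if h : 2 * (k:ℕ) % 2 = 0 then _ else _) = _; rw [dif_pos (by omega)]; simp [Fin.ext_iff]
    · show (if h : (2 * (k:ℕ) + 1) % 2 = 0 then _ else _) = _; rw [dif_neg (by omega)]; simp [Fin.ext_iff]; omega
  right_inv i := by
    by_cases h : (i : ℕ) % 2 = 0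
    · simp only [dif_pos h, Sum.elim_inl]; simp [Fin.ext_iff]; omega
    · simp only [dif_neg h, Sum.elim_inr]; simp [Fin.ext_iff]; omega

private lemma det_block_aux (m : ℕ) (hm : 1 ≤ m) (a mu : ℝ) (ha : 0 < a) :
    Matrix.det (Matrix.of fun k l : Fin m => 2 - if k = l then 2*mu/(4*(k:ℕ)+a) else 0)
      = (∏ l : Fin m, ((4*(l:ℕ)+a))⁻¹) *
        ((-1)^m * (2*mu)^(m-1) * (2*mu - ∑ l : Fin m, 2*(4*(l:ℕ)+a))) := by
  have hden : ∀ l : Fin m, (4*((l:ℕ):ℝ)+a) ≠ 0 := fun l => by positivity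
  have key : (Matrix.of fun k l : Fin m => 2 - if k = l then 2*mu/(4*(k:ℕ)+a) else 0)
      = Matrix.of (fun k l : Fin m => (4*((l:ℕ):ℝ)+a)⁻¹ *
          ((fun j : Fin m => 2*(4*((j:ℕ):ℝ)+a)) l - if k = l then 2*mu else 0)) := by
    ext k l
    by_cases h : k = l
    · subst h
      simp only [Matrix.of_apply, if_pos rfl, if_true]
      field_simp
    · simp only [Matrix.of_apply, if_neg h, if_neg h]
      rw [sub_zero, sub_zero]
      field_simp
  rw [key]; refine (Matrix.det_mul_row (fun l : Fin m => (4*((l:ℕ):ℝ)+a)⁻¹) (Matrix.of fun k l : Fin m => (fun j : Fin m => 2*(4*((j:ℕ):ℝ)+a)) l - if k = l then 2*mu else 0)).trans ?_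
  congr 1
  exact det_rankone_aux m hm (fun j : Fin m => 2*(4*((j:ℕ):ℝ)+a)) (2*mu)

theorem det_C (n : ℕ) (hn : 2 ≤ n) (mu : ℝ) :
    Matrix.det (Matrix.of (fun i j : Fin n =>
      1 + (-1 : ℝ) ^ (((i : ℕ) + 1) + ((j : ℕ) + 1)) -
        (if i = j then 2 * mu / (2 * ((i : ℕ) + 1 : ℝ) + 1) else 0)))
    = (-1) ^ n / (ascPochhammer ℝ n).eval (3 / 2 : ℝ) * mu ^ (n - 2) *
        (mu - 2 * ((n / 2 : ℕ) : ℝ) ^ 2 - 3 * ((n / 2 : ℕ) : ℝ)) *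
        (mu - 2 * (((n + 1) / 2 : ℕ) : ℝ) ^ 2 - (((n + 1) / 2 : ℕ) : ℝ)) := by
  set p := (n+1)/2 with hp
  set q := n/2 with hq
  have hpq : p + q = n := by omega
  have hp1 : 1 ≤ p := by omega
  have hq1 : 1 ≤ q := by omega
  set C := (Matrix.of (fun i j : Fin n =>
      1 + (-1 : ℝ) ^ (((i : ℕ) + 1) + ((j : ℕ) + 1)) -
        (if i = j then 2 * mu / (2 * ((i : ℕ) + 1 : ℝ) + 1) else 0))) with hC
  have hsub : C.submatrix (parityEquivAux n) (parityEquivAux n)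
      = Matrix.fromBlocks
        (Matrix.of fun k l : Fin p => 2 - if k = l then 2*mu/(4*(k:ℕ)+3) else 0)
        0 0
        (Matrix.of fun k l : Fin q => 2 - if k = l then 2*mu/(4*(k:ℕ)+5) else 0) := by
    ext x y
    rcases x with k | k <;> rcases y with l | l <;>
      simp only [Matrix.submatrix_apply, parityEquivAux, Equiv.coe_fn_mk, Sum.elim_inl,
        Sum.elim_inr, Matrix.fromBlocks_apply₁₁, Matrix.fromBlocks_apply₁₂,
        Matrix.fromBlocks_apply₂₁, Matrix.fromBlocks_apply₂₂, Matrix.of_apply,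
        Matrix.zero_apply, hC]
    · have he : Even ((2*(k:ℕ)+1) + (2*(l:ℕ)+1)) := ⟨(k:ℕ)+(l:ℕ)+1, by ring⟩
      rw [he.neg_one_pow]
      rw [if_congr (show ((⟨2*(k:ℕ), by have := k.isLt; omega⟩ : Fin n)
          = ⟨2*(l:ℕ), by have := l.isLt; omega⟩) ↔ k = l by simp [Fin.ext_iff]) rfl rfl]
      norm_num
      congr 2
      push_cast; ring
    · have ho : Odd ((2*(k:ℕ)+1) + (2*(l:ℕ)+1+1)) := ⟨(k:ℕ)+(l:ℕ)+1, by ring⟩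
      rw [ho.neg_one_pow, if_neg (by simp [Fin.ext_iff]; omega)]
      ring
    · have ho : Odd ((2*(k:ℕ)+1+1) + (2*(l:ℕ)+1)) := ⟨(k:ℕ)+(l:ℕ)+1, by ring⟩
      rw [ho.neg_one_pow, if_neg (by simp [Fin.ext_iff]; omega)]
      ring
    · have he : Even ((2*(k:ℕ)+1+1) + (2*(l:ℕ)+1+1)) := ⟨(k:ℕ)+(l:ℕ)+2, by ring⟩
      rw [he.neg_one_pow]
      rw [if_congr (show ((⟨2*(k:ℕ)+1, by have := k.isLt; omega⟩ : Fin n)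
          = ⟨2*(l:ℕ)+1, by have := l.isLt; omega⟩) ↔ k = l by simp [Fin.ext_iff]) rfl rfl]
      norm_num
      congr 2
      push_cast; ring
  have hdet : C.det = _ := (Matrix.det_submatrix_equiv_self (parityEquivAux n) C).symm
  rw [hdet, hsub, Matrix.det_fromBlocks_zero₂₁,
    det_block_aux p hp1 3 mu (by norm_num), det_block_aux q hq1 5 mu (by norm_num)]
  -- convert Fin sums/products to range
  rw [Fin.prod_univ_eq_prod_range (fun l => ((4*(l:ℝ)+3))⁻¹) p,
    Fin.prod_univ_eq_prod_range (fun l => ((4*(l:ℝ)+5))⁻¹) q,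
    Fin.sum_univ_eq_sum_range (fun l => 2*(4*(l:ℝ)+3)) p,
    Fin.sum_univ_eq_sum_range (fun l => 2*(4*(l:ℝ)+5)) q,
    sum_4k3_aux, sum_4k5_aux]
  have hprod : (∏ l ∈ range p, (4*(l:ℝ)+3)) * (∏ l ∈ range q, (4*(l:ℝ)+5))
      = 2^n * (ascPochhammer ℝ n).eval (3/2 : ℝ) := by
    have h1 : (∏ l ∈ range p, (4*(l:ℝ)+3)) = ∏ k ∈ range p, (2*((2*k:ℕ):ℝ)+3) := by
      refine Finset.prod_congr rfl fun k _ => by push_cast; ring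
    have h2 : (∏ l ∈ range q, (4*(l:ℝ)+5)) = ∏ k ∈ range q, (2*((2*k+1:ℕ):ℝ)+3) := by
      refine Finset.prod_congr rfl fun k _ => by push_cast; ring
    rw [h1, h2, interleave_prod_aux (fun i => 2*(i:ℝ)+3) n, poch_prod_aux,
      show (2:ℝ)^n = ∏ _i ∈ range n, (2:ℝ) by rw [Finset.prod_const, Finset.card_range],
      ← Finset.prod_mul_distrib]
    exact Finset.prod_congr rfl fun i _ => by ring
  have hP : (0:ℝ) < (ascPochhammer ℝ n).eval (3/2 : ℝ) := poch_pos_aux n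
  have hprodpos : (0:ℝ) < (∏ l ∈ range p, (4*(l:ℝ)+3)) :=
    Finset.prod_pos fun l _ => by positivity
  have hprodpos' : (0:ℝ) < (∏ l ∈ range q, (4*(l:ℝ)+5)) :=
    Finset.prod_pos fun l _ => by positivity
  -- powers
  have hpow : (2*mu)^(p-1) * (2*mu)^(q-1) = 2^(n-2) * mu^(n-2) := by
    rw [← pow_add, show p-1+(q-1) = n-2 by omega, mul_pow]
  have hsign : ((-1:ℝ))^p * (-1)^q = (-1)^n := by rw [← pow_add, hpq]
  have h2n : (2:ℝ)^n = 2^(n-2) * 4 := by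
    rw [show n = (n-2)+2 by omega, pow_add]
    norm_num
  have hinv : (∏ i ∈ range p, (4*(i:ℝ)+3)⁻¹) * (∏ i ∈ range q, (4*(i:ℝ)+5)⁻¹)
      = (2^(n-2) * 4 * (ascPochhammer ℝ n).eval (3/2 : ℝ))⁻¹ := by
    rw [Finset.prod_inv_distrib, Finset.prod_inv_distrib, ← mul_inv, hprod, h2n]
  calc (∏ i ∈ range p, (4*(i:ℝ)+3)⁻¹) * ((-1)^p * (2*mu)^(p-1) * (2*mu - (4*(p:ℝ)^2 + 2*p))) *
      ((∏ i ∈ range q, (4*(i:ℝ)+5)⁻¹) * ((-1)^q * (2*mu)^(q-1) * (2*mu - (4*(q:ℝ)^2 + 6*q))))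
      = ((∏ i ∈ range p, (4*(i:ℝ)+3)⁻¹) * (∏ i ∈ range q, (4*(i:ℝ)+5)⁻¹)) *
        (((-1:ℝ))^p * (-1)^q) * ((2*mu)^(p-1) * (2*mu)^(q-1)) *
        ((2*mu - (4*(p:ℝ)^2 + 2*p)) * (2*mu - (4*(q:ℝ)^2 + 6*q))) := by ring
    _ = (2^(n-2) * 4 * (ascPochhammer ℝ n).eval (3/2 : ℝ))⁻¹ * (-1)^n *
        (2^(n-2) * mu^(n-2)) *
        ((2*mu - (4*(p:ℝ)^2 + 2*p)) * (2*mu - (4*(q:ℝ)^2 + 6*q))) := by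
        rw [hinv, hsign, hpow]
    _ = (-1) ^ n / (ascPochhammer ℝ n).eval (3 / 2 : ℝ) * mu ^ (n - 2) *
        (mu - 2 * ((q:ℕ) : ℝ) ^ 2 - 3 * ((q:ℕ) : ℝ)) *
        (mu - 2 * ((p:ℕ) : ℝ) ^ 2 - ((p:ℕ) : ℝ)) := by
        have h2 : ((2:ℝ)^(n-2)) ≠ 0 := by positivity
        field_simp
        ring
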